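/- The two-parameter quasi-shuffle product ⧢, extended bilinearly to the free R-module R⟨C⟩ with basis the matrix compositions, is commutative and associative, with the empty composition e as multiplicative unit. -/

import Mathlib

open scoped Classical

namespace TwoParam

/-! ### The free commutative monoid on `d` generators, written additively -/

abbrev Md (d : ℕ) := Fin d →₀ ℕ

/-! ### Raw matrices over `Md d` and matrix compositions

A raw matrix is a function `ℕ → ℕ → Md d` together with a number of rows and
columns, normalized to be `0` (= the neutral element `ε`) outside the range.
The empty composition is the `0 × 0` matrix. -/

structure RawMat (d : ℕ) where
  rows : ℕ
  cols : ℕ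
  entry : ℕ → ℕ → Md d
  entry_eq_zero : ∀ i j : ℕ, rows ≤ i ∨ cols ≤ j → entry i j = 0

namespace RawMat

variable {d : ℕ}

/-- A matrix composition: no row and no column consists entirely of `ε`.
(The empty `0 × 0` matrix vacuously satisfies this.) -/
def IsComp (a : RawMat d) : Prop :=
  (∀ i < a.rows, ∃ j < a.cols, a.entry i j ≠ 0) ∧
  (∀ j < a.cols, ∃ i < a.rows, a.entry i j ≠ 0)

/-- The empty composition. -/
def empty (d : ℕ) : RawMat d := ⟨0, 0, fun _ _ => 0, fun _ _ _ => rfl⟩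

/-- Diagonal block concatenation of two matrices. -/
def diag (a b : RawMat d) : RawMat d where
  rows := a.rows + b.rows
  cols := a.cols + b.cols
  entry := fun i j =>
    if i < a.rows ∧ j < a.cols then a.entry i j
    else if a.rows ≤ i ∧ a.cols ≤ j then b.entry (i - a.rows) (j - a.cols)
    else 0
  entry_eq_zero := by
    intro i j h
    try dsimp only
    split_ifs with h1 h2
    · exact absurd h (by omega)
    · exact b.entry_eq_zero _ _ (by omega)
    · rfl

/-- A non-empty composition is connected if it admits no nontrivial
block-diagonal decomposition into compositions. -/
def Connected (a : RawMat d) : Prop :=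
  a.IsComp ∧ a ≠ empty d ∧
    ∀ b c : RawMat d, b.IsComp → c.IsComp → a = b.diag c →
      b = empty d ∨ c = empty d

/-- Total weight of a matrix: the homomorphism `Md d → ℕ` sending every
generator to `1`, summed over all entries. -/
def weight (a : RawMat d) : ℕ :=
  ∑ i ∈ Finset.range a.rows, ∑ j ∈ Finset.range a.cols,
    (a.entry i j).sum fun _ e => e

end RawMat

/-! ### Evaluation of monomials -/

/-- For `z ∈ R^d` and `m ∈ Md d`, the evaluation `z^(m) = ∏ j, z j ^ m j`. -/
def evalMon {d : ℕ} {R : Type*} [CommRing R] (z : Fin d → R) (m : Md d) : R :=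
  m.prod fun j e => z j ^ e

/-! ### Two-parameter sums signature -/

/-- Strictly increasing chains of length `m` with values in `[lo, hi)`
(0-based indexing of the data). -/
noncomputable def chainsB (m lo hi : ℕ) : Finset (Fin m → ℕ) :=
  (Fintype.piFinset fun _ : Fin m => Finset.Ico lo hi).filter StrictMono

/-- The bounded two-parameter sums signature coefficient `⟨SS_{l;r}(Z), a⟩`. -/
noncomputable def SSb {d : ℕ} {R : Type*} [CommRing R]
    (Z : ℕ × ℕ → Fin d → R) (l r : ℕ × ℕ) (a : RawMat d) : R :=
  ∑ ι ∈ chainsB a.rows l.1 r.1, ∑ κ ∈ chainsB a.cols l.2 r.2,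
    ∏ s : Fin a.rows, ∏ t : Fin a.cols, evalMon (Z (ι s, κ t)) (a.entry s t)

/-- The (unbounded) two-parameter sums signature coefficient `⟨SS(Z), a⟩`,
for finitely supported `Z` a finite sum. -/
noncomputable def SSc {d : ℕ} {R : Type*} [CommRing R]
    (Z : ℕ × ℕ → Fin d → R) (a : RawMat d) : R :=
  ∑ᶠ ι ∈ {f : Fin a.rows → ℕ | StrictMono f},
    ∑ᶠ κ ∈ {g : Fin a.cols → ℕ | StrictMono g},
      ∏ s : Fin a.rows, ∏ t : Fin a.cols, evalMon (Z (ι s, κ t)) (a.entry s t)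

/-! ### Quasi-shuffle surjections -/

/-- `qShSet m s j`: surjections `{1,…,m+s} ↠ {1,…,j}` that are strictly
increasing on the first `m` and on the last `s` arguments. -/
noncomputable def qShSet (m s j : ℕ) : Finset (Fin (m + s) → Fin j) :=
  Finset.univ.filter fun q =>
    Function.Surjective q ∧
    (∀ u v : Fin (m + s), u < v → (v : ℕ) < m → q u < q v) ∧
    (∀ u v : Fin (m + s), u < v → m ≤ (u : ℕ) → q u < q v)

/-- The summand `c^{p,q}` of the two-parameter quasi-shuffle: the `j × k`
matrix with entries `⋆_{u ∈ p⁻¹(x), v ∈ q⁻¹(y)} diag(a,b)_{u,v}`. -/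
noncomputable def qshMat {d : ℕ} (a b : RawMat d) {j k : ℕ}
    (p : Fin (a.rows + b.rows) → Fin j) (q : Fin (a.cols + b.cols) → Fin k) :
    RawMat d where
  rows := j
  cols := k
  entry := fun x y =>
    if hx : x < j then
      if hy : y < k then
        ∑ u ∈ Finset.univ.filter (fun u => p u = ⟨x, hx⟩),
          ∑ v ∈ Finset.univ.filter (fun v => q v = ⟨y, hy⟩),
            (a.diag b).entry u v
      else 0
    else 0
  entry_eq_zero := by
    intro x y h
    try dsimp only
    split_ifs with hx hy
    · exact absurd h (by omega)
    · rfl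
    · rfl

/-- The two-parameter quasi-shuffle `a ⧢ b`, as an element of the free
`R`-module on matrices.  (The empty index sets for `j` or `k` outside
`[0, rows+rows]` resp. `[0, cols+cols]` implement the conventions
`e ⧢ a = a ⧢ e = a` and `e ⧢ e = e`.) -/
noncomputable def qsh {d : ℕ} (R : Type*) [CommRing R] (a b : RawMat d) :
    RawMat d →₀ R :=
  ∑ j ∈ Finset.range (a.rows + b.rows + 1),
    ∑ k ∈ Finset.range (a.cols + b.cols + 1),
      ∑ p ∈ qShSet a.rows b.rows j,
        ∑ q ∈ qShSet a.cols b.cols k,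
          Finsupp.single (qshMat a b p q) 1

/-- Bilinear extension of the quasi-shuffle to the free module. -/
noncomputable def qshL {d : ℕ} {R : Type*} [CommRing R]
    (F G : RawMat d →₀ R) : RawMat d →₀ R :=
  F.sum fun a ra => G.sum fun b rb => (ra * rb) • qsh R a b

/-! ### Two-parameter data: eventually zero / eventually constant functions -/

variable {V : Type*}

/-- Eventually zero two-parameter data: finite support. -/
def EvZ [Zero V] (X : ℕ × ℕ → V) : Prop := (Function.support X).Finite

/-- Eventually constant two-parameter data: there is a box outside of which
`X` is constant; i.e. whenever two values differ, one of the two indices lies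
in the box. -/
def EvC (X : ℕ × ℕ → V) : Prop :=
  ∃ n : ℕ × ℕ, ∀ i j : ℕ × ℕ, X i ≠ X j →
    (i.1 ≤ n.1 ∧ i.2 ≤ n.2) ∨ (j.1 ≤ n.1 ∧ j.2 ≤ n.2)

/-- The coordinate of `i` along the axis `a` (axis `0` = rows, `1` = cols). -/
def axC (a : Fin 2) (i : ℕ × ℕ) : ℕ := if a = 0 then i.1 else i.2

/-- Shift an index one step down along the axis `a`. -/
def shiftD (a : Fin 2) (i : ℕ × ℕ) : ℕ × ℕ :=
  if a = 0 then (i.1 - 1, i.2) else (i.1, i.2 - 1)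

/-- The zero insertion operator (0-based position `k`): insert a zero
row/column at position `k` along axis `a`. -/
def zeroIns [Zero V] (a : Fin 2) (k : ℕ) (X : ℕ × ℕ → V) : ℕ × ℕ → V :=
  fun i => if axC a i < k then X i else if axC a i = k then 0 else X (shiftD a i)

/-- The warping operator (0-based position `k`): duplicate the row/column at
position `k` along axis `a`. -/
def warp (a : Fin 2) (k : ℕ) (X : ℕ × ℕ → V) : ℕ × ℕ → V :=
  fun i => if axC a i ≤ k then X i else X (shiftD a i)

/-- The two-parameter (forward) difference operator `δ`. -/
def diffOp [AddCommGroup V] (X : ℕ × ℕ → V) : ℕ × ℕ → V := fun i =>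
  X (i.1 + 1, i.2 + 1) - X (i.1 + 1, i.2) - X (i.1, i.2 + 1) + X (i.1, i.2)

/-- The summation operator `ς`, a right inverse of `δ`:
`(ς Z)_{i,j} = Σ_{s ≥ i} Σ_{t ≥ j} Z_{s,t}`. -/
noncomputable def sigmaOp [AddCommMonoid V] (Z : ℕ × ℕ → V) : ℕ × ℕ → V :=
  fun i => ∑ᶠ p ∈ {p : ℕ × ℕ | i.1 ≤ p.1 ∧ i.2 ≤ p.2}, Z p

/-- The set of all `n ∈ ℕ²` such that `X` is determined inside the
`n.1 × n.2` upper-left box (0-based size/count convention). -/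
def sizeSetC (X : ℕ × ℕ → V) : Set (ℕ × ℕ) :=
  {n | ∀ i j : ℕ × ℕ, X i ≠ X j →
    (i.1 < n.1 ∧ i.2 < n.2) ∨ (j.1 < n.1 ∧ j.2 < n.2)}

/-- `rows(X)` for eventually constant `X`: first component of the least
element of `sizeSetC X`. -/
noncomputable def rowsC (X : ℕ × ℕ → V) : ℕ := sInf (Prod.fst '' sizeSetC X)

/-- `cols(X)` for eventually constant `X`. -/
noncomputable def colsC (X : ℕ × ℕ → V) : ℕ := sInf (Prod.snd '' sizeSetC X)

/-- `rows(Z)` for eventually zero `Z`, defined via the support. -/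
noncomputable def rowsZ [Zero V] (Z : ℕ × ℕ → V) : ℕ :=
  sInf {m : ℕ | ∀ i : ℕ × ℕ, Z i ≠ 0 → i.1 < m}

/-- `cols(Z)` for eventually zero `Z`, defined via the support. -/
noncomputable def colsZ [Zero V] (Z : ℕ × ℕ → V) : ℕ :=
  sInf {m : ℕ | ∀ i : ℕ × ℕ, Z i ≠ 0 → i.2 < m}

/-- Diagonal concatenation `A ⊘ B` on eventually zero functions,
with `rows`/`cols` taken in the eventually-constant sense. -/
noncomputable def dconc [AddCommGroup V] (A B : ℕ × ℕ → V) : ℕ × ℕ → V :=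
  A + (zeroIns 0 0)^[rowsC A] ((zeroIns 1 0)^[colsC A] B)

/-- Diagonal concatenation `A ⊘ B` on eventually zero functions,
with `rows`/`cols` taken in the support sense. -/
noncomputable def dconcZ [AddCommGroup V] (A B : ℕ × ℕ → V) : ℕ × ℕ → V :=
  A + (zeroIns 0 0)^[rowsZ A] ((zeroIns 1 0)^[colsZ A] B)

/-- Concatenation along the diagonal `X ⊠ Y` on eventually constant
functions: `ς(δX) + Warp_{1,1}^{rows X}(Warp_{2,1}^{cols X}(Y))`. -/
noncomputable def bconc [AddCommGroup V] (X Y : ℕ × ℕ → V) : ℕ × ℕ → V :=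
  sigmaOp (diffOp X) + (warp 0 0)^[rowsC X] ((warp 1 0)^[colsC X] Y)


/-! ### Two-parameter quasisymmetric functions -/

/-- Monomials in the commuting variables `x_{i,j}`, `(i,j) ∈ ℕ × ℕ`. -/
abbrev Mon := (ℕ × ℕ) →₀ ℕ

/-- Total degree of a monomial. -/
def mdeg (m : Mon) : ℕ := m.sum fun _ e => e

/-- A formal power series (given by its coefficient function) has finite
total degree. -/
def FinDeg {R : Type*} [Zero R] (f : Mon → R) : Prop :=
  ∃ D : ℕ, ∀ m : Mon, f m ≠ 0 → mdeg m ≤ D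

/-- `ℕ₀`-valued raw matrices, normalized to vanish outside the range. -/
structure NMat where
  rows : ℕ
  cols : ℕ
  entry : ℕ → ℕ → ℕ
  entry_eq_zero : ∀ i j : ℕ, rows ≤ i ∨ cols ≤ j → entry i j = 0

namespace NMat

/-- An `ℕ₀`-matrix composition: no zero row and no zero column. -/
def IsComp (a : NMat) : Prop :=
  (∀ i < a.rows, ∃ j < a.cols, a.entry i j ≠ 0) ∧
  (∀ j < a.cols, ∃ i < a.rows, a.entry i j ≠ 0)

/-- The empty composition. -/
def empty : NMat := ⟨0, 0, fun _ _ => 0, fun _ _ _ => rfl⟩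

/-- Diagonal block concatenation. -/
def diag (a b : NMat) : NMat where
  rows := a.rows + b.rows
  cols := a.cols + b.cols
  entry := fun i j =>
    if i < a.rows ∧ j < a.cols then a.entry i j
    else if a.rows ≤ i ∧ a.cols ≤ j then b.entry (i - a.rows) (j - a.cols)
    else 0
  entry_eq_zero := by
    intro i j h
    try dsimp only
    split_ifs with h1 h2
    · exact absurd h (by omega)
    · exact b.entry_eq_zero _ _ (by omega)
    · rfl

end NMat

/-- The monomial `∏_{s,t} x_{ι_s, κ_t}^{a_{s,t}}` attached to a matrix `a`
and chains `ι`, `κ`. -/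
noncomputable def monomialOf (a : NMat) (ι : Fin a.rows → ℕ) (κ : Fin a.cols → ℕ) : Mon :=
  ∑ s : Fin a.rows, ∑ t : Fin a.cols, Finsupp.single (ι s, κ t) (a.entry s t)

/-- The monomial quasisymmetric function `M_a` (as a coefficient function):
each monomial `∏ x_{ι_s,κ_t}^{a_{s,t}}` for strictly increasing chains occurs
with coefficient `1`.  In particular `M_e = 1`. -/
noncomputable def monQ {R : Type*} [CommRing R] (a : NMat) : Mon → R := fun m =>
  if ∃ (ι : Fin a.rows → ℕ) (κ : Fin a.cols → ℕ),
      StrictMono ι ∧ StrictMono κ ∧ m = monomialOf a ι κ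
  then 1 else 0

/-- Two-parameter quasisymmetric function: finite degree, and for every
matrix composition `a` and all strictly increasing chains `ι`, `κ`, the
coefficients of `∏ x_{ι_s,κ_t}^{a_{s,t}}` and of `∏ x_{s,t}^{a_{s,t}}`
coincide. -/
def IsQSym {R : Type*} [CommRing R] (f : Mon → R) : Prop :=
  FinDeg f ∧ ∀ a : NMat, a.IsComp →
    ∀ (ι : Fin a.rows → ℕ) (κ : Fin a.cols → ℕ), StrictMono ι → StrictMono κ →
      f (monomialOf a ι κ) =
        f (monomialOf a (fun s => (s : ℕ)) (fun t => (t : ℕ)))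

/-- Product of formal power series (Cauchy product of coefficient
functions). -/
noncomputable def mulF {R : Type*} [CommRing R] (f g : Mon → R) : Mon → R :=
  fun m => ∑ p ∈ Finset.HasAntidiagonal.antidiagonal m, f p.1 * g p.2

/-- Two-parameter quasisymmetric functions form an `R`-submodule of the
module of coefficient functions. -/
noncomputable def QSymSub (R : Type*) [CommRing R] : Submodule R (Mon → R) where
  carrier := {f | IsQSym f}
  add_mem' := by
    rintro f g ⟨⟨Df, hDf⟩, hf⟩ ⟨⟨Dg, hDg⟩, hg⟩
    refine ⟨⟨max Df Dg, ?_⟩, ?_⟩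
    · intro m hm
      by_contra hc
      push_neg at hc
      have h1 : f m = 0 := by
        by_contra h
        have := hDf m h
        omega
      have h2 : g m = 0 := by
        by_contra h
        have := hDg m h
        omega
      apply hm
      show f m + g m = 0
      rw [h1, h2, add_zero]
    · intro a ha ι κ hι hκ
      show f _ + g _ = f _ + g _
      rw [hf a ha ι κ hι hκ, hg a ha ι κ hι hκ]
  zero_mem' := ⟨⟨0, fun _ hm => absurd rfl hm⟩, fun _ _ _ _ _ _ => rfl⟩
  smul_mem' := by
    rintro c f ⟨⟨Df, hDf⟩, hf⟩
    refine ⟨⟨Df, ?_⟩, ?_⟩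
    · intro m hm
      apply hDf
      intro h
      apply hm
      show c • f m = 0
      rw [h, smul_zero]
    · intro a ha ι κ hι hκ
      show c • f _ = c • f _
      rw [hf a ha ι κ hι hκ]

/-- Index shift used by the free analogue of zero insertion: indices with
coordinate `≥ k` along axis `a` are shifted up by one (axis `0` = rows). -/
def liftIdx (a : Fin 2) (k : ℕ) (i : ℕ × ℕ) : ℕ × ℕ :=
  if a = 0 then (if i.1 < k then i else (i.1 + 1, i.2))
  else (if i.2 < k then i else (i.1, i.2 + 1))

/-- The free analogue of zero insertion on formal power series: the algebra
endomorphism sending `x_i ↦ x_i` for `i_a < k`, `x_i ↦ 0` for `i_a = k` and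
`x_i ↦ x_{i - e_a}` for `i_a > k` (0-based position `k`).  On coefficient
functions it is given by precomposition with the index lift. -/
noncomputable def zeroF {R : Type*} [CommRing R] (a : Fin 2) (k : ℕ)
    (f : Mon → R) : Mon → R :=
  fun m => f (m.mapDomain (liftIdx a k))

/-- The quasi-shuffle summand `c^{p,q}` for `ℕ₀`-matrices. -/
noncomputable def nQshMat (a b : NMat) {j k : ℕ}
    (p : Fin (a.rows + b.rows) → Fin j) (q : Fin (a.cols + b.cols) → Fin k) :
    NMat where
  rows := j
  cols := k
  entry := fun x y =>
    if hx : x < j then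
      if hy : y < k then
        ∑ u ∈ Finset.univ.filter (fun u => p u = ⟨x, hx⟩),
          ∑ v ∈ Finset.univ.filter (fun v => q v = ⟨y, hy⟩),
            (a.diag b).entry u v
      else 0
    else 0
  entry_eq_zero := by
    intro x y h
    try dsimp only
    split_ifs with hx hy
    · exact absurd h (by omega)
    · rfl
    · rfl

/-- One-dimensional two-parameter sums signature coefficient `⟨SS(Z), a⟩`. -/
noncomputable def SScN {K : Type*} [CommRing K] (Z : ℕ × ℕ → K) (a : NMat) : K :=
  ∑ᶠ ι ∈ {f : Fin a.rows → ℕ | StrictMono f},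
    ∑ᶠ κ ∈ {g : Fin a.cols → ℕ | StrictMono g},
      ∏ s : Fin a.rows, ∏ t : Fin a.cols, Z (ι s, κ t) ^ a.entry s t

/-- Evaluation of a formal power series at finitely supported data. -/
noncomputable def evalSeries {K : Type*} [CommRing K] (f : Mon → K)
    (Z : ℕ × ℕ → K) : K :=
  ∑ᶠ m : Mon, f m * m.prod fun i e => Z i ^ e

end TwoParam

namespace TwoParam
section AuxComb
open Finset

open Finset

noncomputable def smono (m j : ℕ) : Finset (Fin m → Fin j) :=
  Finset.univ.filter StrictMono
lemma mem_smono {m j : ℕ} {f : Fin m → Fin j} : f ∈ smono m j ↔ StrictMono f := by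
  simp [smono]
def covers2 {m s j : ℕ} (f : Fin m → Fin j) (g : Fin s → Fin j) : Prop :=
  ∀ x, (∃ u, f u = x) ∨ (∃ u, g u = x)
def covers3 {m s t j : ℕ} (F : Fin m → Fin j) (G : Fin s → Fin j)
    (H : Fin t → Fin j) : Prop :=
  ∀ x, (∃ u, F u = x) ∨ (∃ u, G u = x) ∨ (∃ u, H u = x)
noncomputable def cov2 (m s j : ℕ) : Finset ((Fin m → Fin j) × (Fin s → Fin j)) :=
  (smono m j ×ˢ smono s j).filter fun p => covers2 p.1 p.2
noncomputable def cov3 (m s t j : ℕ) :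
    Finset ((Fin m → Fin j) × (Fin s → Fin j) × (Fin t → Fin j)) :=
  (smono m j ×ˢ smono s j ×ˢ smono t j).filter fun p => covers3 p.1 p.2.1 p.2.2
lemma mem_cov2 {m s j : ℕ} {p : (Fin m → Fin j) × (Fin s → Fin j)} :
    p ∈ cov2 m s j ↔ StrictMono p.1 ∧ StrictMono p.2 ∧ covers2 p.1 p.2 := by
  simp [cov2, smono, Finset.mem_filter, Finset.mem_product, and_assoc]
lemma cov2_empty_of_gt {m s j : ℕ} (h : m + s < j) : cov2 m s j = ∅ := by
  rw [Finset.eq_empty_iff_forall_notMem]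
  rintro ⟨f, g⟩ hp
  obtain ⟨hf, hg, hcov⟩ := mem_cov2.1 hp
  have hsub : (Finset.univ : Finset (Fin j)) ⊆
      Finset.univ.image f ∪ Finset.univ.image g := by
    intro x _
    rcases hcov x with ⟨u, hu⟩ | ⟨u, hu⟩
    · exact Finset.mem_union_left _ (Finset.mem_image.2 ⟨u, Finset.mem_univ u, hu⟩)
    · exact Finset.mem_union_right _ (Finset.mem_image.2 ⟨u, Finset.mem_univ u, hu⟩)
  have := Finset.card_le_card hsub
  have h1 := Finset.card_union_le (Finset.univ.image f) (Finset.univ.image g)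
  have h2 := Finset.card_image_le (s := (Finset.univ : Finset (Fin m))) (f := f)
  have h3 := Finset.card_image_le (s := (Finset.univ : Finset (Fin s))) (f := g)
  simp only [Finset.card_univ, Fintype.card_fin] at this h2 h3
  omega

noncomputable def imset {m s j : ℕ} (F : Fin m → Fin j) (G : Fin s → Fin j) :
    Finset (Fin j) :=
  Finset.univ.image F ∪ Finset.univ.image G

lemma mem_imset {m s j : ℕ} {F : Fin m → Fin j} {G : Fin s → Fin j} {x : Fin j} :
    x ∈ imset F G ↔ (∃ u, F u = x) ∨ (∃ u, G u = x) := by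
  simp [imset]

lemma imset_card_le {m s j : ℕ} (F : Fin m → Fin j) (G : Fin s → Fin j) :
    (imset F G).card ≤ m + s := by
  have h1 := Finset.card_union_le (Finset.univ.image F) (Finset.univ.image G)
  have h2 := Finset.card_image_le (s := (Finset.univ : Finset (Fin m))) (f := F)
  have h3 := Finset.card_image_le (s := (Finset.univ : Finset (Fin s))) (f := G)
  simp only [Finset.card_univ, Fintype.card_fin] at h2 h3
  calc (imset F G).card ≤ _ + _ := h1
  _ ≤ m + s := by omega


lemma core_fiber {N : Type*} [AddCommMonoid N] {m s j : ℕ}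
    (F : Fin m → Fin j) (G : Fin s → Fin j) (hF : StrictMono F) (hG : StrictMono G)
    (X : N) :
    (∑ i ∈ Finset.range (m + s + 1), ∑ fg ∈ cov2 m s i, ∑ φ ∈ smono i j,
      if (φ ∘ fg.1, φ ∘ fg.2) = (F, G) then X else 0) = X := by
  classical
  set S : Finset (Fin j) := imset F G with hS
  set i₀ : ℕ := S.card with hi₀
  have hcard : S.card = i₀ := rfl
  set φ₀ : Fin i₀ → Fin j := fun w => S.orderEmbOfFin hcard w with hφ₀
  have hφ₀mono : StrictMono φ₀ := (S.orderEmbOfFin hcard).strictMono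
  have hmemF : ∀ u, F u ∈ S := fun u => mem_imset.2 (Or.inl ⟨u, rfl⟩)
  have hmemG : ∀ u, G u ∈ S := fun u => mem_imset.2 (Or.inr ⟨u, rfl⟩)
  set f₀ : Fin m → Fin i₀ := fun u => (S.orderIsoOfFin hcard).symm ⟨F u, hmemF u⟩ with hf₀
  set g₀ : Fin s → Fin i₀ := fun u => (S.orderIsoOfFin hcard).symm ⟨G u, hmemG u⟩ with hg₀
  have hφf₀ : ∀ u, φ₀ (f₀ u) = F u := by
    intro u
    simp only [hφ₀, hf₀]
    rw [← Finset.coe_orderIsoOfFin_apply, OrderIso.apply_symm_apply]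
  have hφg₀ : ∀ u, φ₀ (g₀ u) = G u := by
    intro u
    simp only [hφ₀, hg₀]
    rw [← Finset.coe_orderIsoOfFin_apply, OrderIso.apply_symm_apply]
  have hf₀mono : StrictMono f₀ := fun u v huv =>
    (S.orderIsoOfFin hcard).symm.strictMono (Subtype.mk_lt_mk.2 (hF huv))
  have hg₀mono : StrictMono g₀ := fun u v huv =>
    (S.orderIsoOfFin hcard).symm.strictMono (Subtype.mk_lt_mk.2 (hG huv))
  have hcov₀ : covers2 f₀ g₀ := by
    intro w
    have hw : φ₀ w ∈ S := Finset.orderEmbOfFin_mem S hcard w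
    rcases mem_imset.1 hw with ⟨u, hu⟩ | ⟨u, hu⟩
    · exact Or.inl ⟨u, hφ₀mono.injective (by rw [hφf₀ u, hu])⟩
    · exact Or.inr ⟨u, hφ₀mono.injective (by rw [hφg₀ u, hu])⟩
  have hmem₀ : (f₀, g₀) ∈ cov2 m s i₀ := mem_cov2.2 ⟨hf₀mono, hg₀mono, hcov₀⟩
  -- image characterization for any admissible triple
  have himg : ∀ (i : ℕ) (fg : (Fin m → Fin i) × (Fin s → Fin i)) (φ : Fin i → Fin j),
      fg ∈ cov2 m s i → (φ ∘ fg.1, φ ∘ fg.2) = (F, G) →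
      Finset.univ.image φ = S := by
    intro i fg φ hfg hc
    obtain ⟨hf, hg, hcov⟩ := mem_cov2.1 hfg
    have hcF : ∀ u, φ (fg.1 u) = F u := fun u => congrFun (congrArg Prod.fst hc) u
    have hcG : ∀ u, φ (fg.2 u) = G u := fun u => congrFun (congrArg Prod.snd hc) u
    apply Finset.Subset.antisymm
    · intro x hx
      obtain ⟨w, _, rfl⟩ := Finset.mem_image.1 hx
      rcases hcov w with ⟨u, hu⟩ | ⟨u, hu⟩
      · rw [show φ w = F u by rw [← hu, hcF u]]; exact hmemF u
      · rw [show φ w = G u by rw [← hu, hcG u]]; exact hmemG u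
    · intro x hx
      rcases mem_imset.1 hx with ⟨u, hu⟩ | ⟨u, hu⟩
      · exact Finset.mem_image.2 ⟨fg.1 u, Finset.mem_univ _, by rw [hcF u, hu]⟩
      · exact Finset.mem_image.2 ⟨fg.2 u, Finset.mem_univ _, by rw [hcG u, hu]⟩
  have hieq : ∀ (i : ℕ) (fg : (Fin m → Fin i) × (Fin s → Fin i)) (φ : Fin i → Fin j),
      fg ∈ cov2 m s i → StrictMono φ → (φ ∘ fg.1, φ ∘ fg.2) = (F, G) → i = i₀ := by
    intro i fg φ hfg hφ hc
    rw [hi₀, ← himg i fg φ hfg hc, Finset.card_image_of_injective _ hφ.injective,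
      Finset.card_univ, Fintype.card_fin]
  -- uniqueness at i₀
  have hφuniq : ∀ (fg : (Fin m → Fin i₀) × (Fin s → Fin i₀)) (φ : Fin i₀ → Fin j),
      fg ∈ cov2 m s i₀ → StrictMono φ → (φ ∘ fg.1, φ ∘ fg.2) = (F, G) →
      φ = φ₀ ∧ fg = (f₀, g₀) := by
    intro fg φ hfg hφ hc
    have him := himg i₀ fg φ hfg hc
    have hmem : ∀ w, φ w ∈ S := by
      intro w; rw [← him]; exact Finset.mem_image.2 ⟨w, Finset.mem_univ _, rfl⟩
    have hφeq : φ = φ₀ := Finset.orderEmbOfFin_unique hcard hmem hφ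
    have hcF : ∀ u, φ (fg.1 u) = F u := fun u => congrFun (congrArg Prod.fst hc) u
    have hcG : ∀ u, φ (fg.2 u) = G u := fun u => congrFun (congrArg Prod.snd hc) u
    refine ⟨hφeq, Prod.ext ?_ ?_⟩
    · funext u
      apply hφ₀mono.injective
      rw [← hφeq, hcF u, ← hφf₀ u, hφeq]
    · funext u
      apply hφ₀mono.injective
      rw [← hφeq, hcG u, ← hφg₀ u, hφeq]
  -- now evaluate the sum
  rw [Finset.sum_eq_single i₀]
  · rw [Finset.sum_eq_single (f₀, g₀)]
    · rw [Finset.sum_eq_single φ₀]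
      · rw [if_pos]
        exact Prod.ext (funext hφf₀) (funext hφg₀)
      · intro φ hφ hne
        rw [if_neg]
        intro hc
        exact hne (hφuniq (f₀, g₀) φ hmem₀ (mem_smono.1 hφ) hc).1
      · intro h; exact absurd (mem_smono.2 hφ₀mono) h
    · intro fg hfg hne
      apply Finset.sum_eq_zero
      intro φ hφ
      rw [if_neg]
      intro hc
      exact hne (hφuniq fg φ hfg (mem_smono.1 hφ) hc).2
    · intro h; exact absurd hmem₀ h
  · intro i _ hne
    apply Finset.sum_eq_zero; intro fg hfg
    apply Finset.sum_eq_zero; intro φ hφ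
    rw [if_neg]
    intro hc
    exact hne (hieq i fg φ hfg (mem_smono.1 hφ) hc)
  · intro h
    have hle := imset_card_le F G
    rw [← hS] at hle
    exact absurd (Finset.mem_range.2 (by omega)) h


/-- Unique factorization of pairs of strict monos through a jointly
surjective pair, summed form. -/
lemma core {N : Type*} [AddCommMonoid N] (m s j : ℕ)
    (T : (Fin m → Fin j) → (Fin s → Fin j) → N) :
    (∑ i ∈ Finset.range (m + s + 1), ∑ fg ∈ cov2 m s i, ∑ φ ∈ smono i j,
      T (φ ∘ fg.1) (φ ∘ fg.2))
    = ∑ F ∈ smono m j, ∑ G ∈ smono s j, T F G := by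
  classical
  have step1 :
      (∑ i ∈ Finset.range (m + s + 1), ∑ fg ∈ cov2 m s i, ∑ φ ∈ smono i j,
        T (φ ∘ fg.1) (φ ∘ fg.2))
      = ∑ i ∈ Finset.range (m + s + 1), ∑ fg ∈ cov2 m s i, ∑ φ ∈ smono i j,
          ∑ FG ∈ smono m j ×ˢ smono s j,
            if (φ ∘ fg.1, φ ∘ fg.2) = FG then T FG.1 FG.2 else 0 := by
    refine Finset.sum_congr rfl fun i _ => Finset.sum_congr rfl fun fg hfg =>
      Finset.sum_congr rfl fun φ hφ => ?_
    have hmem : (φ ∘ fg.1, φ ∘ fg.2) ∈ smono m j ×ˢ smono s j := by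
      obtain ⟨h1, h2, _⟩ := mem_cov2.1 hfg
      exact Finset.mem_product.2 ⟨mem_smono.2 ((mem_smono.1 hφ).comp h1),
        mem_smono.2 ((mem_smono.1 hφ).comp h2)⟩
    rw [Finset.sum_ite_eq (smono m j ×ˢ smono s j) (φ ∘ fg.1, φ ∘ fg.2)
      (fun FG => T FG.1 FG.2), if_pos hmem]
  rw [step1]
  have step2 :
      (∑ i ∈ Finset.range (m + s + 1), ∑ fg ∈ cov2 m s i, ∑ φ ∈ smono i j,
          ∑ FG ∈ smono m j ×ˢ smono s j,
            if (φ ∘ fg.1, φ ∘ fg.2) = FG then T FG.1 FG.2 else 0)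
      = ∑ FG ∈ smono m j ×ˢ smono s j, ∑ i ∈ Finset.range (m + s + 1),
          ∑ fg ∈ cov2 m s i, ∑ φ ∈ smono i j,
            if (φ ∘ fg.1, φ ∘ fg.2) = FG then T FG.1 FG.2 else 0 := by
    calc _ = ∑ i ∈ Finset.range (m + s + 1), ∑ fg ∈ cov2 m s i,
          ∑ FG ∈ smono m j ×ˢ smono s j, ∑ φ ∈ smono i j,
            if (φ ∘ fg.1, φ ∘ fg.2) = FG then T FG.1 FG.2 else 0 :=
        Finset.sum_congr rfl fun i _ => Finset.sum_congr rfl fun fg _ => Finset.sum_comm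
      _ = ∑ i ∈ Finset.range (m + s + 1), ∑ FG ∈ smono m j ×ˢ smono s j,
          ∑ fg ∈ cov2 m s i, ∑ φ ∈ smono i j,
            if (φ ∘ fg.1, φ ∘ fg.2) = FG then T FG.1 FG.2 else 0 :=
        Finset.sum_congr rfl fun i _ => Finset.sum_comm
      _ = _ := Finset.sum_comm
  rw [step2, Finset.sum_product]
  refine Finset.sum_congr rfl fun F hF => Finset.sum_congr rfl fun G hG => ?_
  exact core_fiber F G (mem_smono.1 hF) (mem_smono.1 hG) (T F G)


lemma covers2_comp_iff {m s i t j : ℕ} {f : Fin m → Fin i} {g : Fin s → Fin i}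
    (hcov : covers2 f g) (φ : Fin i → Fin j) (h : Fin t → Fin j) :
    covers2 φ h ↔ covers3 (φ ∘ f) (φ ∘ g) h := by
  constructor
  · intro hc x
    rcases hc x with ⟨w, hw⟩ | ⟨u, hu⟩
    · rcases hcov w with ⟨u, hu⟩ | ⟨u, hu⟩
      · exact Or.inl ⟨u, by simp only [Function.comp_apply, hu, hw]⟩
      · exact Or.inr (Or.inl ⟨u, by simp only [Function.comp_apply, hu, hw]⟩)
    · exact Or.inr (Or.inr ⟨u, hu⟩)
  · intro hc x
    rcases hc x with ⟨u, hu⟩ | ⟨u, hu⟩ | ⟨u, hu⟩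
    · exact Or.inl ⟨f u, hu⟩
    · exact Or.inl ⟨g u, hu⟩
    · exact Or.inr ⟨u, hu⟩

lemma covers2_comp_iff' {m s i t j : ℕ} {g : Fin s → Fin i} {h : Fin t → Fin i}
    (hcov : covers2 g h) (f : Fin m → Fin j) (ψ : Fin i → Fin j) :
    covers2 f ψ ↔ covers3 f (ψ ∘ g) (ψ ∘ h) := by
  constructor
  · intro hc x
    rcases hc x with ⟨u, hu⟩ | ⟨w, hw⟩
    · exact Or.inl ⟨u, hu⟩
    · rcases hcov w with ⟨u, hu⟩ | ⟨u, hu⟩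
      · exact Or.inr (Or.inl ⟨u, by simp only [Function.comp_apply, hu, hw]⟩)
      · exact Or.inr (Or.inr ⟨u, by simp only [Function.comp_apply, hu, hw]⟩)
  · intro hc x
    rcases hc x with ⟨u, hu⟩ | ⟨u, hu⟩ | ⟨u, hu⟩
    · exact Or.inl ⟨u, hu⟩
    · exact Or.inr ⟨g u, hu⟩
    · exact Or.inr ⟨h u, hu⟩

/-- Left-nested reindexing of iterated factorizations. -/
lemma reindexL {N : Type*} [AddCommMonoid N] (m s t : ℕ)
    (M : (j : ℕ) → (Fin m → Fin j) → (Fin s → Fin j) → (Fin t → Fin j) → N) :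
    (∑ i ∈ Finset.range (m + s + 1), ∑ fg ∈ cov2 m s i,
      ∑ j ∈ Finset.range (i + t + 1), ∑ ph ∈ cov2 i t j,
        M j (ph.1 ∘ fg.1) (ph.1 ∘ fg.2) ph.2)
    = ∑ j ∈ Finset.range (m + s + t + 1), ∑ FGH ∈ cov3 m s t j,
        M j FGH.1 FGH.2.1 FGH.2.2 := by
  classical
  -- Step 1: extend the inner range
  have ext1 :
      (∑ i ∈ Finset.range (m + s + 1), ∑ fg ∈ cov2 m s i,
        ∑ j ∈ Finset.range (i + t + 1), ∑ ph ∈ cov2 i t j,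
          M j (ph.1 ∘ fg.1) (ph.1 ∘ fg.2) ph.2)
      = ∑ i ∈ Finset.range (m + s + 1), ∑ fg ∈ cov2 m s i,
        ∑ j ∈ Finset.range (m + s + t + 1), ∑ ph ∈ cov2 i t j,
          M j (ph.1 ∘ fg.1) (ph.1 ∘ fg.2) ph.2 := by
    refine Finset.sum_congr rfl fun i hi => Finset.sum_congr rfl fun fg _ => ?_
    have hi' : i ≤ m + s := by
      have := Finset.mem_range.1 hi; omega
    refine Finset.sum_subset (Finset.range_subset_range.2 (by omega)) ?_
    intro j _ hj
    have : i + t < j := by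
      have := Finset.mem_range.1 ‹j ∈ Finset.range (m + s + t + 1)›
      simp only [Finset.mem_range, not_lt] at hj
      omega
    rw [cov2_empty_of_gt this, Finset.sum_empty]
  rw [ext1]
  -- Step 2: pull the j-sum out
  have swap1 :
      (∑ i ∈ Finset.range (m + s + 1), ∑ fg ∈ cov2 m s i,
        ∑ j ∈ Finset.range (m + s + t + 1), ∑ ph ∈ cov2 i t j,
          M j (ph.1 ∘ fg.1) (ph.1 ∘ fg.2) ph.2)
      = ∑ j ∈ Finset.range (m + s + t + 1), ∑ i ∈ Finset.range (m + s + 1),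
        ∑ fg ∈ cov2 m s i, ∑ ph ∈ cov2 i t j,
          M j (ph.1 ∘ fg.1) (ph.1 ∘ fg.2) ph.2 := by
    calc _ = ∑ i ∈ Finset.range (m + s + 1), ∑ j ∈ Finset.range (m + s + t + 1),
          ∑ fg ∈ cov2 m s i, ∑ ph ∈ cov2 i t j,
            M j (ph.1 ∘ fg.1) (ph.1 ∘ fg.2) ph.2 :=
        Finset.sum_congr rfl fun i _ => Finset.sum_comm
      _ = _ := Finset.sum_comm
  rw [swap1]
  refine Finset.sum_congr rfl fun j _ => ?_
  -- Step 3: unpack the ph-sum and pull out h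
  have unpack :
      (∑ i ∈ Finset.range (m + s + 1), ∑ fg ∈ cov2 m s i, ∑ ph ∈ cov2 i t j,
          M j (ph.1 ∘ fg.1) (ph.1 ∘ fg.2) ph.2)
      = ∑ h ∈ smono t j, ∑ i ∈ Finset.range (m + s + 1), ∑ fg ∈ cov2 m s i,
          ∑ φ ∈ smono i j,
            if covers3 (φ ∘ fg.1) (φ ∘ fg.2) h then M j (φ ∘ fg.1) (φ ∘ fg.2) h
            else 0 := by
    calc _ = ∑ i ∈ Finset.range (m + s + 1), ∑ fg ∈ cov2 m s i,
          ∑ φ ∈ smono i j, ∑ h ∈ smono t j,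
            if covers3 (φ ∘ fg.1) (φ ∘ fg.2) h then M j (φ ∘ fg.1) (φ ∘ fg.2) h
            else 0 := by
          refine Finset.sum_congr rfl fun i _ => Finset.sum_congr rfl fun fg hfg => ?_
          rw [cov2, Finset.sum_filter, Finset.sum_product]
          refine Finset.sum_congr rfl fun φ _ => Finset.sum_congr rfl fun h _ => ?_
          obtain ⟨-, -, hcov⟩ := mem_cov2.1 hfg
          rw [covers2_comp_iff hcov φ h]
      _ = ∑ i ∈ Finset.range (m + s + 1), ∑ fg ∈ cov2 m s i,
          ∑ h ∈ smono t j, ∑ φ ∈ smono i j, _ :=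
        Finset.sum_congr rfl fun i _ => Finset.sum_congr rfl fun fg _ =>
          Finset.sum_comm
      _ = ∑ i ∈ Finset.range (m + s + 1), ∑ h ∈ smono t j,
          ∑ fg ∈ cov2 m s i, ∑ φ ∈ smono i j, _ :=
        Finset.sum_congr rfl fun i _ => Finset.sum_comm
      _ = _ := Finset.sum_comm
  rw [unpack]
  -- Step 4: apply the core factorization for each h
  have main : ∀ h ∈ smono t j,
      (∑ i ∈ Finset.range (m + s + 1), ∑ fg ∈ cov2 m s i, ∑ φ ∈ smono i j,
        if covers3 (φ ∘ fg.1) (φ ∘ fg.2) h then M j (φ ∘ fg.1) (φ ∘ fg.2) h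
        else 0)
      = ∑ F ∈ smono m j, ∑ G ∈ smono s j,
          if covers3 F G h then M j F G h else 0 := fun h _ =>
    core m s j (fun F G => if covers3 F G h then M j F G h else 0)
  rw [Finset.sum_congr rfl main]
  -- Step 5: repackage the right-hand side
  calc _ = ∑ F ∈ smono m j, ∑ G ∈ smono s j, ∑ h ∈ smono t j,
        if covers3 F G h then M j F G h else 0 := by
        calc _ = ∑ F ∈ smono m j, ∑ h ∈ smono t j, ∑ G ∈ smono s j,
              if covers3 F G h then M j F G h else 0 := Finset.sum_comm
          _ = _ := Finset.sum_congr rfl fun F _ => Finset.sum_comm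
    _ = _ := by
        rw [cov3, Finset.sum_filter, Finset.sum_product]
        refine Finset.sum_congr rfl fun F _ => ?_
        rw [Finset.sum_product]


/-- Right-nested reindexing of iterated factorizations. -/
lemma reindexR {N : Type*} [AddCommMonoid N] (m s t : ℕ)
    (M : (j : ℕ) → (Fin m → Fin j) → (Fin s → Fin j) → (Fin t → Fin j) → N) :
    (∑ i ∈ Finset.range (s + t + 1), ∑ gh ∈ cov2 s t i,
      ∑ j ∈ Finset.range (m + i + 1), ∑ fψ ∈ cov2 m i j,
        M j fψ.1 (fψ.2 ∘ gh.1) (fψ.2 ∘ gh.2))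
    = ∑ j ∈ Finset.range (m + s + t + 1), ∑ FGH ∈ cov3 m s t j,
        M j FGH.1 FGH.2.1 FGH.2.2 := by
  classical
  have ext1 :
      (∑ i ∈ Finset.range (s + t + 1), ∑ gh ∈ cov2 s t i,
        ∑ j ∈ Finset.range (m + i + 1), ∑ fψ ∈ cov2 m i j,
          M j fψ.1 (fψ.2 ∘ gh.1) (fψ.2 ∘ gh.2))
      = ∑ i ∈ Finset.range (s + t + 1), ∑ gh ∈ cov2 s t i,
        ∑ j ∈ Finset.range (m + s + t + 1), ∑ fψ ∈ cov2 m i j,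
          M j fψ.1 (fψ.2 ∘ gh.1) (fψ.2 ∘ gh.2) := by
    refine Finset.sum_congr rfl fun i hi => Finset.sum_congr rfl fun gh _ => ?_
    have hi' : i ≤ s + t := by
      have := Finset.mem_range.1 hi; omega
    refine Finset.sum_subset (Finset.range_subset_range.2 (by omega)) ?_
    intro j hjmem hj
    have : m + i < j := by
      have := Finset.mem_range.1 hjmem
      simp only [Finset.mem_range, not_lt] at hj
      omega
    rw [cov2_empty_of_gt this, Finset.sum_empty]
  rw [ext1]
  have swap1 :
      (∑ i ∈ Finset.range (s + t + 1), ∑ gh ∈ cov2 s t i,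
        ∑ j ∈ Finset.range (m + s + t + 1), ∑ fψ ∈ cov2 m i j,
          M j fψ.1 (fψ.2 ∘ gh.1) (fψ.2 ∘ gh.2))
      = ∑ j ∈ Finset.range (m + s + t + 1), ∑ i ∈ Finset.range (s + t + 1),
        ∑ gh ∈ cov2 s t i, ∑ fψ ∈ cov2 m i j,
          M j fψ.1 (fψ.2 ∘ gh.1) (fψ.2 ∘ gh.2) := by
    calc _ = ∑ i ∈ Finset.range (s + t + 1), ∑ j ∈ Finset.range (m + s + t + 1),
          ∑ gh ∈ cov2 s t i, ∑ fψ ∈ cov2 m i j,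
            M j fψ.1 (fψ.2 ∘ gh.1) (fψ.2 ∘ gh.2) :=
        Finset.sum_congr rfl fun i _ => Finset.sum_comm
      _ = _ := Finset.sum_comm
  rw [swap1]
  refine Finset.sum_congr rfl fun j _ => ?_
  have unpack :
      (∑ i ∈ Finset.range (s + t + 1), ∑ gh ∈ cov2 s t i, ∑ fψ ∈ cov2 m i j,
          M j fψ.1 (fψ.2 ∘ gh.1) (fψ.2 ∘ gh.2))
      = ∑ f ∈ smono m j, ∑ i ∈ Finset.range (s + t + 1), ∑ gh ∈ cov2 s t i,
          ∑ ψ ∈ smono i j,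
            if covers3 f (ψ ∘ gh.1) (ψ ∘ gh.2) then M j f (ψ ∘ gh.1) (ψ ∘ gh.2)
            else 0 := by
    calc _ = ∑ i ∈ Finset.range (s + t + 1), ∑ gh ∈ cov2 s t i,
          ∑ f ∈ smono m j, ∑ ψ ∈ smono i j,
            if covers3 f (ψ ∘ gh.1) (ψ ∘ gh.2) then M j f (ψ ∘ gh.1) (ψ ∘ gh.2)
            else 0 := by
          refine Finset.sum_congr rfl fun i _ => Finset.sum_congr rfl fun gh hgh => ?_
          rw [cov2, Finset.sum_filter, Finset.sum_product]
          refine Finset.sum_congr rfl fun f _ => Finset.sum_congr rfl fun ψ _ => ?_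
          obtain ⟨-, -, hcov⟩ := mem_cov2.1 hgh
          rw [covers2_comp_iff' hcov f ψ]
      _ = ∑ i ∈ Finset.range (s + t + 1), ∑ f ∈ smono m j,
          ∑ gh ∈ cov2 s t i, ∑ ψ ∈ smono i j, _ :=
        Finset.sum_congr rfl fun i _ => Finset.sum_comm
      _ = _ := Finset.sum_comm
  rw [unpack]
  have main : ∀ f ∈ smono m j,
      (∑ i ∈ Finset.range (s + t + 1), ∑ gh ∈ cov2 s t i, ∑ ψ ∈ smono i j,
        if covers3 f (ψ ∘ gh.1) (ψ ∘ gh.2) then M j f (ψ ∘ gh.1) (ψ ∘ gh.2)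
        else 0)
      = ∑ G ∈ smono s j, ∑ H ∈ smono t j,
          if covers3 f G H then M j f G H else 0 := fun f _ =>
    core s t j (fun G H => if covers3 f G H then M j f G H else 0)
  rw [Finset.sum_congr rfl main]
  rw [cov3, Finset.sum_filter, Finset.sum_product]
  refine Finset.sum_congr rfl fun F _ => ?_
  rw [Finset.sum_product]


lemma sum_fiber_comp {N : Type*} [AddCommMonoid N] {A i j : ℕ}
    (φ : Fin i → Fin j) (f : Fin A → Fin i) (x : Fin j) (e : Fin A → N) :
    (∑ w ∈ Finset.univ.filter (fun w => φ w = x),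
      ∑ u ∈ Finset.univ.filter (fun u => f u = w), e u)
    = ∑ u ∈ Finset.univ.filter (fun u => φ (f u) = x), e u := by
  rw [Finset.sum_fiberwise_eq_sum_filter (Finset.univ) (Finset.univ.filter (fun w => φ w = x)) f e]
  congr 1
  ext u
  simp


end AuxComb
end TwoParam

namespace TwoParam
section AuxMat
open Finset

variable {d : ℕ}

lemma RawMat.ext' {a b : RawMat d} (hr : a.rows = b.rows)
    (hc : a.cols = b.cols) (he : a.entry = b.entry) : a = b := by
  cases a; cases b
  subst hr; subst hc; subst he; rfl

/-- The quasi-shuffle summand in terms of a pair of strict monos on rows and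
columns. -/
noncomputable def cMat2 (a b : RawMat d) {j k : ℕ}
    (f : Fin a.rows → Fin j) (g : Fin b.rows → Fin j)
    (f' : Fin a.cols → Fin k) (g' : Fin b.cols → Fin k) : RawMat d where
  rows := j
  cols := k
  entry := fun x y =>
    if hx : x < j then
      if hy : y < k then
        (∑ u ∈ Finset.univ.filter (fun u => f u = ⟨x, hx⟩),
           ∑ v ∈ Finset.univ.filter (fun v => f' v = ⟨y, hy⟩), a.entry u v)
        + (∑ u ∈ Finset.univ.filter (fun u => g u = ⟨x, hx⟩),
           ∑ v ∈ Finset.univ.filter (fun v => g' v = ⟨y, hy⟩), b.entry u v)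
      else 0
    else 0
  entry_eq_zero := by
    intro x y h
    split_ifs with hx hy
    · exact absurd h (by omega)
    · rfl
    · rfl

/-- The triple quasi-shuffle summand. -/
noncomputable def cMat3 (a b c : RawMat d) {j k : ℕ}
    (F : Fin a.rows → Fin j) (G : Fin b.rows → Fin j) (H : Fin c.rows → Fin j)
    (F' : Fin a.cols → Fin k) (G' : Fin b.cols → Fin k) (H' : Fin c.cols → Fin k) :
    RawMat d where
  rows := j
  cols := k
  entry := fun x y =>
    if hx : x < j then
      if hy : y < k then
        (∑ u ∈ Finset.univ.filter (fun u => F u = ⟨x, hx⟩),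
           ∑ v ∈ Finset.univ.filter (fun v => F' v = ⟨y, hy⟩), a.entry u v)
        + (∑ u ∈ Finset.univ.filter (fun u => G u = ⟨x, hx⟩),
           ∑ v ∈ Finset.univ.filter (fun v => G' v = ⟨y, hy⟩), b.entry u v)
        + (∑ u ∈ Finset.univ.filter (fun u => H u = ⟨x, hx⟩),
           ∑ v ∈ Finset.univ.filter (fun v => H' v = ⟨y, hy⟩), c.entry u v)
      else 0
    else 0
  entry_eq_zero := by
    intro x y h
    split_ifs with hx hy
    · exact absurd h (by omega)
    · rfl
    · rfl

lemma diag_entry_ll (a b : RawMat d) (u : Fin a.rows) (v : Fin a.cols) :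
    (a.diag b).entry (Fin.castAdd b.rows u) (Fin.castAdd b.cols v) = a.entry u v := by
  dsimp only [RawMat.diag]
  rw [if_pos ⟨u.isLt, v.isLt⟩]
  rfl

lemma diag_entry_lr (a b : RawMat d) (u : Fin a.rows) (v : Fin b.cols) :
    (a.diag b).entry (Fin.castAdd b.rows u) (Fin.natAdd a.cols v) = 0 := by
  dsimp only [RawMat.diag]
  have h1 := u.isLt
  rw [if_neg (by simp only [Fin.coe_castAdd, Fin.coe_natAdd]; omega),
    if_neg (by simp only [Fin.coe_castAdd, Fin.coe_natAdd]; omega)]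

lemma diag_entry_rl (a b : RawMat d) (u : Fin b.rows) (v : Fin a.cols) :
    (a.diag b).entry (Fin.natAdd a.rows u) (Fin.castAdd b.cols v) = 0 := by
  dsimp only [RawMat.diag]
  have h1 := v.isLt
  rw [if_neg (by simp only [Fin.coe_castAdd, Fin.coe_natAdd]; omega),
    if_neg (by simp only [Fin.coe_castAdd, Fin.coe_natAdd]; omega)]

lemma diag_entry_rr (a b : RawMat d) (u : Fin b.rows) (v : Fin b.cols) :
    (a.diag b).entry (Fin.natAdd a.rows u) (Fin.natAdd a.cols v) = b.entry u v := by
  dsimp only [RawMat.diag]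
  rw [if_neg (by simp only [Fin.coe_natAdd]; omega),
    if_pos ⟨by simp only [Fin.coe_natAdd]; omega, by simp only [Fin.coe_natAdd]; omega⟩]
  simp only [Fin.coe_natAdd]
  congr 1 <;> omega

/-- `qshMat` in terms of the splittings of the surjections. -/
lemma qshMat_eq_cMat2 (a b : RawMat d) {j k : ℕ}
    (p : Fin (a.rows + b.rows) → Fin j) (q : Fin (a.cols + b.cols) → Fin k) :
    qshMat a b p q
      = cMat2 a b (p ∘ Fin.castAdd b.rows) (p ∘ Fin.natAdd a.rows)
          (q ∘ Fin.castAdd b.cols) (q ∘ Fin.natAdd a.cols) := by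
  refine RawMat.ext' rfl rfl ?_
  funext x y
  dsimp only [qshMat, cMat2]
  split_ifs with hx hy
  · simp only [Finset.sum_filter, Function.comp_apply, Fin.sum_univ_add,
      diag_entry_ll, diag_entry_lr, diag_entry_rl, diag_entry_rr, ite_self,
      Finset.sum_const_zero, add_zero, zero_add]
  · rfl
  · rfl

/-- Joining a pair of maps into a single map on `Fin (m + s)`. -/
noncomputable def joinFn {m s j : ℕ} (f : Fin m → Fin j) (g : Fin s → Fin j) :
    Fin (m + s) → Fin j :=
  fun u => if h : (u : ℕ) < m then f ⟨u, h⟩ else g ⟨(u : ℕ) - m, by omega⟩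

lemma mem_qShSet {m s j : ℕ} {q : Fin (m + s) → Fin j} :
    q ∈ qShSet m s j ↔
      Function.Surjective q ∧
      (∀ u v : Fin (m + s), u < v → (v : ℕ) < m → q u < q v) ∧
      (∀ u v : Fin (m + s), u < v → m ≤ (u : ℕ) → q u < q v) := by
  simp [qShSet]

lemma split_mem_cov2 {m s j : ℕ} {q : Fin (m + s) → Fin j} (hq : q ∈ qShSet m s j) :
    (q ∘ Fin.castAdd s, q ∘ Fin.natAdd m) ∈ cov2 m s j := by
  obtain ⟨hsurj, h1, h2⟩ := mem_qShSet.1 hq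
  refine mem_cov2.2 ⟨?_, ?_, ?_⟩
  · intro u v huv
    exact h1 (Fin.castAdd s u) (Fin.castAdd s v) huv v.isLt
  · intro u v huv
    exact h2 (Fin.natAdd m u) (Fin.natAdd m v)
      (Nat.add_lt_add_left (show (u : ℕ) < (v : ℕ) from huv) m)
      (Nat.le_add_right m u)
  · intro x
    obtain ⟨u, rfl⟩ := hsurj x
    by_cases h : (u : ℕ) < m
    · exact Or.inl ⟨⟨u, h⟩, congrArg q (Fin.ext rfl)⟩
    · refine Or.inr ⟨⟨(u : ℕ) - m, by omega⟩, congrArg q (Fin.ext ?_)⟩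
      show m + ((u : ℕ) - m) = (u : ℕ)
      omega

lemma join_mem_qShSet {m s j : ℕ} {fg : (Fin m → Fin j) × (Fin s → Fin j)}
    (hfg : fg ∈ cov2 m s j) : joinFn fg.1 fg.2 ∈ qShSet m s j := by
  obtain ⟨hf, hg, hcov⟩ := mem_cov2.1 hfg
  refine mem_qShSet.2 ⟨?_, ?_, ?_⟩
  · intro x
    rcases hcov x with ⟨u, hu⟩ | ⟨u, hu⟩
    · refine ⟨Fin.castAdd s u, ?_⟩
      unfold joinFn
      rw [dif_pos (show ((Fin.castAdd s u : Fin (m + s)) : ℕ) < m from u.isLt), ← hu]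
      exact congrArg fg.1 (Fin.ext rfl)
    · refine ⟨Fin.natAdd m u, ?_⟩
      unfold joinFn
      rw [dif_neg (show ¬ ((Fin.natAdd m u : Fin (m + s)) : ℕ) < m from by
        show ¬ m + (u : ℕ) < m; omega), ← hu]
      refine congrArg fg.2 (Fin.ext ?_)
      show m + (u : ℕ) - m = (u : ℕ)
      omega
  · intro u v huv hv
    have huv' : (u : ℕ) < (v : ℕ) := huv
    have hu : (u : ℕ) < m := by omega
    unfold joinFn
    rw [dif_pos hu, dif_pos hv]
    exact hf (show ((u : ℕ) : ℕ) < (v : ℕ) from huv')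
  · intro u v huv hu
    have huv' : (u : ℕ) < (v : ℕ) := huv
    unfold joinFn
    rw [dif_neg (show ¬ (u : ℕ) < m by omega), dif_neg (show ¬ (v : ℕ) < m by omega)]
    exact hg (show (u : ℕ) - m < (v : ℕ) - m by omega)

lemma join_split {m s j : ℕ} (q : Fin (m + s) → Fin j) :
    joinFn (q ∘ Fin.castAdd s) (q ∘ Fin.natAdd m) = q := by
  funext u
  unfold joinFn
  split_ifs with h
  · exact congrArg q (Fin.ext rfl)
  · refine congrArg q (Fin.ext ?_)
    show m + ((u : ℕ) - m) = (u : ℕ)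
    omega

lemma split_join_left {m s j : ℕ} (f : Fin m → Fin j) (g : Fin s → Fin j) :
    joinFn f g ∘ Fin.castAdd s = f := by
  funext u
  show joinFn f g (Fin.castAdd s u) = f u
  unfold joinFn
  rw [dif_pos (show ((Fin.castAdd s u : Fin (m + s)) : ℕ) < m from u.isLt)]
  exact congrArg f (Fin.ext rfl)

lemma split_join_right {m s j : ℕ} (f : Fin m → Fin j) (g : Fin s → Fin j) :
    joinFn f g ∘ Fin.natAdd m = g := by
  funext u
  show joinFn f g (Fin.natAdd m u) = g u
  unfold joinFn
  rw [dif_neg (show ¬ ((Fin.natAdd m u : Fin (m + s)) : ℕ) < m from by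
    show ¬ m + (u : ℕ) < m; omega)]
  refine congrArg g (Fin.ext ?_)
  show m + (u : ℕ) - m = (u : ℕ)
  omega

variable {R : Type*} [CommRing R]

/-- The quasi-shuffle in the strict-mono-pairs parametrization. -/
noncomputable def qsh2 (R : Type*) [CommRing R] (a b : RawMat d) : RawMat d →₀ R :=
  ∑ j ∈ Finset.range (a.rows + b.rows + 1),
    ∑ fg ∈ cov2 a.rows b.rows j,
      ∑ k ∈ Finset.range (a.cols + b.cols + 1),
        ∑ fg' ∈ cov2 a.cols b.cols k,
          Finsupp.single (cMat2 a b fg.1 fg.2 fg'.1 fg'.2) 1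

lemma qsh_eq_qsh2 (a b : RawMat d) : qsh R a b = qsh2 R a b := by
  unfold qsh qsh2
  refine Finset.sum_congr rfl fun j _ => ?_
  rw [Finset.sum_comm]
  refine Finset.sum_nbij' (fun p => (p ∘ Fin.castAdd b.rows, p ∘ Fin.natAdd a.rows))
    (fun fg => joinFn fg.1 fg.2) (fun p hp => split_mem_cov2 hp)
    (fun fg hfg => join_mem_qShSet hfg) (fun p _ => join_split p)
    (fun fg _ => Prod.ext (split_join_left _ _) (split_join_right _ _))
    (fun p _ => ?_)
  refine Finset.sum_congr rfl fun k _ => ?_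
  refine Finset.sum_nbij' (fun q => (q ∘ Fin.castAdd b.cols, q ∘ Fin.natAdd a.cols))
    (fun fg' => joinFn fg'.1 fg'.2) (fun q hq => split_mem_cov2 hq)
    (fun fg' hfg' => join_mem_qShSet hfg') (fun q _ => join_split q)
    (fun fg' _ => Prod.ext (split_join_left _ _) (split_join_right _ _))
    (fun q _ => ?_)
  rw [qshMat_eq_cMat2]

end AuxMat
end TwoParam

namespace TwoParam
section AuxAlg
open Finset

variable {d : ℕ}

lemma sum_fiber_comp2 {N : Type*} [AddCommMonoid N] {A B i i' j k : ℕ}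
    (φ : Fin i → Fin j) (f : Fin A → Fin i) (φ' : Fin i' → Fin k) (f' : Fin B → Fin i')
    (x : Fin j) (y : Fin k) (e : Fin A → Fin B → N) :
    (∑ w ∈ Finset.univ.filter (fun w => φ w = x),
      ∑ z ∈ Finset.univ.filter (fun z => φ' z = y),
        ∑ u ∈ Finset.univ.filter (fun u => f u = w),
          ∑ v ∈ Finset.univ.filter (fun v => f' v = z), e u v)
    = ∑ u ∈ Finset.univ.filter (fun u => φ (f u) = x),
        ∑ v ∈ Finset.univ.filter (fun v => φ' (f' v) = y), e u v := by
  have inner : ∀ w : Fin i,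
      (∑ z ∈ Finset.univ.filter (fun z => φ' z = y),
        ∑ u ∈ Finset.univ.filter (fun u => f u = w),
          ∑ v ∈ Finset.univ.filter (fun v => f' v = z), e u v)
      = ∑ u ∈ Finset.univ.filter (fun u => f u = w),
          ∑ v ∈ Finset.univ.filter (fun v => φ' (f' v) = y), e u v := by
    intro w
    rw [Finset.sum_comm]
    exact Finset.sum_congr rfl fun u _ => sum_fiber_comp φ' f' y (fun v => e u v)
  rw [Finset.sum_congr rfl fun w _ => inner w]
  exact sum_fiber_comp φ f x _

lemma cMat2_entry_lt (a b : RawMat d) {j k : ℕ}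
    (f : Fin a.rows → Fin j) (g : Fin b.rows → Fin j)
    (f' : Fin a.cols → Fin k) (g' : Fin b.cols → Fin k) (w : Fin j) (z : Fin k) :
    (cMat2 a b f g f' g').entry w z
      = (∑ u ∈ Finset.univ.filter (fun u => f u = w),
           ∑ v ∈ Finset.univ.filter (fun v => f' v = z), a.entry u v)
        + (∑ u ∈ Finset.univ.filter (fun u => g u = w),
           ∑ v ∈ Finset.univ.filter (fun v => g' v = z), b.entry u v) := by
  dsimp only [cMat2]
  rw [dif_pos w.isLt, dif_pos z.isLt]

lemma cMat2_entry_eq (a b : RawMat d) {j k : ℕ}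
    (f : Fin a.rows → Fin j) (g : Fin b.rows → Fin j)
    (f' : Fin a.cols → Fin k) (g' : Fin b.cols → Fin k) (x y : ℕ)
    (hx : x < j) (hy : y < k) :
    (cMat2 a b f g f' g').entry x y
      = (∑ u ∈ Finset.univ.filter (fun u => f u = ⟨x, hx⟩),
           ∑ v ∈ Finset.univ.filter (fun v => f' v = ⟨y, hy⟩), a.entry u v)
        + (∑ u ∈ Finset.univ.filter (fun u => g u = ⟨x, hx⟩),
           ∑ v ∈ Finset.univ.filter (fun v => g' v = ⟨y, hy⟩), b.entry u v) := by
  dsimp only [cMat2]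
  rw [dif_pos hx, dif_pos hy]

lemma cMat3_entry_eq (a b c : RawMat d) {j k : ℕ}
    (F : Fin a.rows → Fin j) (G : Fin b.rows → Fin j) (H : Fin c.rows → Fin j)
    (F' : Fin a.cols → Fin k) (G' : Fin b.cols → Fin k) (H' : Fin c.cols → Fin k)
    (x y : ℕ) (hx : x < j) (hy : y < k) :
    (cMat3 a b c F G H F' G' H').entry x y
      = (∑ u ∈ Finset.univ.filter (fun u => F u = ⟨x, hx⟩),
           ∑ v ∈ Finset.univ.filter (fun v => F' v = ⟨y, hy⟩), a.entry u v)
        + (∑ u ∈ Finset.univ.filter (fun u => G u = ⟨x, hx⟩),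
           ∑ v ∈ Finset.univ.filter (fun v => G' v = ⟨y, hy⟩), b.entry u v)
        + (∑ u ∈ Finset.univ.filter (fun u => H u = ⟨x, hx⟩),
           ∑ v ∈ Finset.univ.filter (fun v => H' v = ⟨y, hy⟩), c.entry u v) := by
  dsimp only [cMat3]
  rw [dif_pos hx, dif_pos hy]

lemma cMat2_cMat2 (a b c : RawMat d) {i i' j k : ℕ}
    (f : Fin a.rows → Fin i) (g : Fin b.rows → Fin i)
    (f' : Fin a.cols → Fin i') (g' : Fin b.cols → Fin i')
    (φ : Fin i → Fin j) (h : Fin c.rows → Fin j)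
    (φ' : Fin i' → Fin k) (h' : Fin c.cols → Fin k) :
    cMat2 (cMat2 a b f g f' g') c φ h φ' h'
      = cMat3 a b c (φ ∘ f) (φ ∘ g) h (φ' ∘ f') (φ' ∘ g') h' := by
  refine RawMat.ext' rfl rfl ?_
  funext x y
  by_cases hx : x < j
  · by_cases hy : y < k
    · rw [cMat2_entry_eq (cMat2 a b f g f' g') c φ h φ' h' x y hx hy,
        cMat3_entry_eq a b c (φ ∘ f) (φ ∘ g) h (φ' ∘ f') (φ' ∘ g') h' x y hx hy]
      erw [Finset.sum_congr rfl fun u _ => Finset.sum_congr rfl fun v _ => cMat2_entry_lt _ _ _ _ _ _ u v]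
      simp only [Finset.sum_add_distrib]
      simp only [Function.comp_apply]
      congr 1
      congr 1
      · exact sum_fiber_comp2 φ f φ' f' ⟨x, hx⟩ ⟨y, hy⟩ (fun u v => a.entry u v)
      · exact sum_fiber_comp2 φ g φ' g' ⟨x, hx⟩ ⟨y, hy⟩ (fun u v => b.entry u v)
    · rw [(cMat2 (cMat2 a b f g f' g') c φ h φ' h').entry_eq_zero x y
          (Or.inr (show k ≤ y by omega)),
        (cMat3 a b c (φ ∘ f) (φ ∘ g) h (φ' ∘ f') (φ' ∘ g') h').entry_eq_zero x y
          (Or.inr (show k ≤ y by omega))]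
  · rw [(cMat2 (cMat2 a b f g f' g') c φ h φ' h').entry_eq_zero x y
        (Or.inl (show j ≤ x by omega)),
      (cMat3 a b c (φ ∘ f) (φ ∘ g) h (φ' ∘ f') (φ' ∘ g') h').entry_eq_zero x y
        (Or.inl (show j ≤ x by omega))]

lemma cMat2_cMat2' (a b c : RawMat d) {i i' j k : ℕ}
    (g : Fin b.rows → Fin i) (h : Fin c.rows → Fin i)
    (g' : Fin b.cols → Fin i') (h' : Fin c.cols → Fin i')
    (f : Fin a.rows → Fin j) (ψ : Fin i → Fin j)
    (f' : Fin a.cols → Fin k) (ψ' : Fin i' → Fin k) :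
    cMat2 a (cMat2 b c g h g' h') f ψ f' ψ'
      = cMat3 a b c f (ψ ∘ g) (ψ ∘ h) f' (ψ' ∘ g') (ψ' ∘ h') := by
  refine RawMat.ext' rfl rfl ?_
  funext x y
  by_cases hx : x < j
  · by_cases hy : y < k
    · rw [cMat2_entry_eq a (cMat2 b c g h g' h') f ψ f' ψ' x y hx hy,
        cMat3_entry_eq a b c f (ψ ∘ g) (ψ ∘ h) f' (ψ' ∘ g') (ψ' ∘ h') x y hx hy]
      erw [Finset.sum_congr rfl fun u _ => Finset.sum_congr rfl fun v _ => cMat2_entry_lt _ _ _ _ _ _ u v]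
      simp only [Finset.sum_add_distrib]
      simp only [Function.comp_apply]
      rw [← add_assoc]
      congr 1
      congr 1
      · exact sum_fiber_comp2 ψ g ψ' g' ⟨x, hx⟩ ⟨y, hy⟩ (fun u v => b.entry u v)
      · exact sum_fiber_comp2 ψ h ψ' h' ⟨x, hx⟩ ⟨y, hy⟩ (fun u v => c.entry u v)
    · rw [(cMat2 a (cMat2 b c g h g' h') f ψ f' ψ').entry_eq_zero x y
          (Or.inr (show k ≤ y by omega)),
        (cMat3 a b c f (ψ ∘ g) (ψ ∘ h) f' (ψ' ∘ g') (ψ' ∘ h')).entry_eq_zero x y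
          (Or.inr (show k ≤ y by omega))]
  · rw [(cMat2 a (cMat2 b c g h g' h') f ψ f' ψ').entry_eq_zero x y
        (Or.inl (show j ≤ x by omega)),
      (cMat3 a b c f (ψ ∘ g) (ψ ∘ h) f' (ψ' ∘ g') (ψ' ∘ h')).entry_eq_zero x y
        (Or.inl (show j ≤ x by omega))]

/-! ### unit laws -/

lemma strictMono_fin_id {n : ℕ} {g : Fin n → Fin n} (hg : StrictMono g) : g = id := by
  have h : (Finset.univ : Finset (Fin n)).card = n := by simp
  have h1 := Finset.orderEmbOfFin_unique h (fun x => Finset.mem_univ (g x)) hg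
  have h2 := Finset.orderEmbOfFin_unique h (fun x => Finset.mem_univ (id x))
    (strictMono_id (α := Fin n))
  exact h1.trans h2.symm

lemma cov2_zero_left_ne {s j : ℕ} (h : j ≠ s) : cov2 0 s j = ∅ := by
  rw [Finset.eq_empty_iff_forall_notMem]
  rintro ⟨f, g⟩ hp
  obtain ⟨hf, hg, hcov⟩ := mem_cov2.1 hp
  have hsurj : Function.Surjective g := by
    intro x
    rcases hcov x with ⟨u, _⟩ | hx
    · exact u.elim0
    · exact hx
  have h1 := Fintype.card_le_of_surjective g hsurj
  have h2 := Fintype.card_le_of_injective g hg.injective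
  simp only [Fintype.card_fin] at h1 h2
  omega

lemma cov2_zero_right_ne {m j : ℕ} (h : j ≠ m) : cov2 m 0 j = ∅ := by
  rw [Finset.eq_empty_iff_forall_notMem]
  rintro ⟨f, g⟩ hp
  obtain ⟨hf, hg, hcov⟩ := mem_cov2.1 hp
  have hsurj : Function.Surjective f := by
    intro x
    rcases hcov x with hx | ⟨u, _⟩
    · exact hx
    · exact u.elim0
  have h1 := Fintype.card_le_of_surjective f hsurj
  have h2 := Fintype.card_le_of_injective f hf.injective
  simp only [Fintype.card_fin] at h1 h2
  omega

lemma cov2_zero_left_self (s : ℕ) : cov2 0 s s = {(Fin.elim0, id)} := by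
  ext p
  rw [Finset.mem_singleton, mem_cov2]
  constructor
  · rintro ⟨hf, hg, hcov⟩
    exact Prod.ext (funext fun u => u.elim0) (strictMono_fin_id hg)
  · rintro rfl
    exact ⟨fun u => u.elim0, strictMono_id, fun x => Or.inr ⟨x, rfl⟩⟩

lemma cov2_zero_right_self (m : ℕ) : cov2 m 0 m = {(id, Fin.elim0)} := by
  ext p
  rw [Finset.mem_singleton, mem_cov2]
  constructor
  · rintro ⟨hf, hg, hcov⟩
    exact Prod.ext (strictMono_fin_id hf) (funext fun u => u.elim0)
  · rintro rfl
    exact ⟨strictMono_id, fun u => u.elim0, fun x => Or.inl ⟨x, rfl⟩⟩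

lemma cMat2_empty_left (a : RawMat d) (f : Fin 0 → Fin a.rows)
    (f' : Fin 0 → Fin a.cols) :
    cMat2 (RawMat.empty d) a f id f' id = a := by
  refine RawMat.ext' rfl rfl ?_
  funext x y
  dsimp only [cMat2]
  split_ifs with hx hy
  · have h0 : (Finset.univ.filter
        (fun u : Fin (RawMat.empty d).rows => f u = ⟨x, hx⟩)) = ∅ := by
      rw [Finset.eq_empty_iff_forall_notMem]
      intro u _
      exact absurd u.isLt (Nat.not_lt_zero _)
    erw [h0, Finset.sum_empty, zero_add]
    simp only [id_eq]
    rw [Finset.filter_eq' Finset.univ (⟨x, hx⟩ : Fin a.rows),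
      Finset.filter_eq' Finset.univ (⟨y, hy⟩ : Fin a.cols),
      if_pos (Finset.mem_univ _), if_pos (Finset.mem_univ _),
      Finset.sum_singleton, Finset.sum_singleton]
  · exact (a.entry_eq_zero x y (Or.inr (by omega))).symm
  · exact (a.entry_eq_zero x y (Or.inl (by omega))).symm

lemma cMat2_empty_right (a : RawMat d) (g : Fin 0 → Fin a.rows)
    (g' : Fin 0 → Fin a.cols) :
    cMat2 a (RawMat.empty d) id g id g' = a := by
  refine RawMat.ext' rfl rfl ?_
  funext x y
  dsimp only [cMat2]
  split_ifs with hx hy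
  · have h0 : (Finset.univ.filter
        (fun u : Fin (RawMat.empty d).rows => g u = ⟨x, hx⟩)) = ∅ := by
      rw [Finset.eq_empty_iff_forall_notMem]
      intro u _
      exact absurd u.isLt (Nat.not_lt_zero _)
    erw [h0, Finset.sum_empty, add_zero]
    simp only [id_eq]
    rw [Finset.filter_eq' Finset.univ (⟨x, hx⟩ : Fin a.rows),
      Finset.filter_eq' Finset.univ (⟨y, hy⟩ : Fin a.cols),
      if_pos (Finset.mem_univ _), if_pos (Finset.mem_univ _),
      Finset.sum_singleton, Finset.sum_singleton]
  · exact (a.entry_eq_zero x y (Or.inr (by omega))).symm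
  · exact (a.entry_eq_zero x y (Or.inl (by omega))).symm

variable {R : Type*} [CommRing R]

lemma qsh2_empty_left (a : RawMat d) :
    (∑ j ∈ Finset.range (0 + a.rows + 1), ∑ fg ∈ cov2 0 a.rows j,
      ∑ k ∈ Finset.range (0 + a.cols + 1), ∑ fg' ∈ cov2 0 a.cols k,
        Finsupp.single (cMat2 (RawMat.empty d) a fg.1 fg.2 fg'.1 fg'.2) (1 : R))
    = Finsupp.single a 1 := by
  rw [Finset.sum_eq_single a.rows]
  · rw [cov2_zero_left_self, Finset.sum_singleton]
    rw [Finset.sum_eq_single a.cols]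
    · rw [cov2_zero_left_self, Finset.sum_singleton]
      show Finsupp.single (cMat2 (RawMat.empty d) a Fin.elim0 id Fin.elim0 id) (1 : R) = _
      rw [cMat2_empty_left]
    · intro k _ hk
      rw [cov2_zero_left_ne hk, Finset.sum_empty]
    · intro hmem
      exact absurd (Finset.mem_range.2 (by omega)) hmem
  · intro j _ hj
    rw [cov2_zero_left_ne hj, Finset.sum_empty]
  · intro hmem
    exact absurd (Finset.mem_range.2 (by omega)) hmem

lemma qsh2_empty_right (a : RawMat d) :
    (∑ j ∈ Finset.range (a.rows + 0 + 1), ∑ fg ∈ cov2 a.rows 0 j,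
      ∑ k ∈ Finset.range (a.cols + 0 + 1), ∑ fg' ∈ cov2 a.cols 0 k,
        Finsupp.single (cMat2 a (RawMat.empty d) fg.1 fg.2 fg'.1 fg'.2) (1 : R))
    = Finsupp.single a 1 := by
  rw [Finset.sum_eq_single a.rows]
  · rw [cov2_zero_right_self, Finset.sum_singleton]
    rw [Finset.sum_eq_single a.cols]
    · rw [cov2_zero_right_self, Finset.sum_singleton]
      show Finsupp.single (cMat2 a (RawMat.empty d) id Fin.elim0 id Fin.elim0) (1 : R) = _
      rw [cMat2_empty_right]
    · intro k _ hk
      rw [cov2_zero_right_ne hk, Finset.sum_empty]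
    · intro hmem
      exact absurd (Finset.mem_range.2 (by omega)) hmem
  · intro j _ hj
    rw [cov2_zero_right_ne hj, Finset.sum_empty]
  · intro hmem
    exact absurd (Finset.mem_range.2 (by omega)) hmem

lemma qsh_empty_left (a : RawMat d) :
    qsh R (RawMat.empty d) a = Finsupp.single a 1 := by
  rw [qsh_eq_qsh2]
  exact qsh2_empty_left a

lemma qsh_empty_right (a : RawMat d) :
    qsh R a (RawMat.empty d) = Finsupp.single a 1 := by
  rw [qsh_eq_qsh2]
  exact qsh2_empty_right a

/-! ### commutativity -/

lemma cMat2_comm (a b : RawMat d) {j k : ℕ}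
    (f : Fin a.rows → Fin j) (g : Fin b.rows → Fin j)
    (f' : Fin a.cols → Fin k) (g' : Fin b.cols → Fin k) :
    cMat2 b a g f g' f' = cMat2 a b f g f' g' := by
  refine RawMat.ext' rfl rfl ?_
  funext x y
  dsimp only [cMat2]
  split_ifs with hx hy
  · rw [add_comm]
  · rfl
  · rfl

lemma swap_mem_cov2 {m s j : ℕ} {p : (Fin m → Fin j) × (Fin s → Fin j)}
    (hp : p ∈ cov2 m s j) : p.swap ∈ cov2 s m j := by
  obtain ⟨h1, h2, hcov⟩ := mem_cov2.1 hp
  exact mem_cov2.2 ⟨h2, h1, fun x => (hcov x).symm⟩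

lemma qsh_comm (a b : RawMat d) : qsh R a b = qsh R b a := by
  rw [qsh_eq_qsh2, qsh_eq_qsh2]
  unfold qsh2
  rw [add_comm b.rows a.rows, add_comm b.cols a.cols]
  refine Finset.sum_congr rfl fun j _ => ?_
  refine Finset.sum_nbij' Prod.swap Prod.swap
    (fun p hp => swap_mem_cov2 hp) (fun p hp => swap_mem_cov2 hp)
    (fun p _ => Prod.swap_swap p) (fun p _ => Prod.swap_swap p)
    (fun fg _ => ?_)
  refine Finset.sum_congr rfl fun k _ => ?_
  refine Finset.sum_nbij' Prod.swap Prod.swap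
    (fun p hp => swap_mem_cov2 hp) (fun p hp => swap_mem_cov2 hp)
    (fun p _ => Prod.swap_swap p) (fun p _ => Prod.swap_swap p)
    (fun fg' _ => ?_)
  rw [show (cMat2 a b fg.1 fg.2 fg'.1 fg'.2) = cMat2 b a fg.swap.1 fg.swap.2
    fg'.swap.1 fg'.swap.2 from (cMat2_comm a b fg.1 fg.2 fg'.1 fg'.2).symm]

/-! ### bilinearity of qshL -/

lemma qshL_single_single (a b : RawMat d) (r r' : R) :
    qshL (Finsupp.single a r) (Finsupp.single b r') = (r * r') • qsh R a b := by
  unfold qshL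
  rw [Finsupp.sum_single_index (by simp), Finsupp.sum_single_index (by simp)]

lemma qshL_zero_left (G : RawMat d →₀ R) : qshL 0 G = 0 := by
  unfold qshL
  exact Finsupp.sum_zero_index

lemma qshL_zero_right (F : RawMat d →₀ R) : qshL F 0 = 0 := by
  unfold qshL
  simp [Finsupp.sum_zero_index]

lemma qshL_add_left (F G H : RawMat d →₀ R) :
    qshL (F + G) H = qshL F H + qshL G H := by
  unfold qshL
  rw [Finsupp.sum_add_index (by simp) ?_]
  · intro a _ b₁ b₂
    rw [← Finsupp.sum_add]
    exact Finsupp.sum_congr fun x _ => by rw [add_mul, add_smul]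

lemma qshL_add_right (F G H : RawMat d →₀ R) :
    qshL F (G + H) = qshL F G + qshL F H := by
  unfold qshL
  rw [← Finsupp.sum_add]
  refine Finsupp.sum_congr fun a _ => ?_
  rw [Finsupp.sum_add_index (by simp) ?_]
  intro b _ b₁ b₂
  rw [mul_add, add_smul]

lemma qshL_smul_left (c : R) (F G : RawMat d →₀ R) :
    qshL (c • F) G = c • qshL F G := by
  unfold qshL
  rw [Finsupp.sum_smul_index (by simp), Finsupp.smul_sum]
  refine Finsupp.sum_congr fun a _ => ?_
  rw [Finsupp.smul_sum]
  refine Finsupp.sum_congr fun b _ => ?_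
  rw [smul_smul, mul_assoc]

lemma qshL_smul_right (c : R) (F G : RawMat d →₀ R) :
    qshL F (c • G) = c • qshL F G := by
  unfold qshL
  rw [Finsupp.smul_sum]
  refine Finsupp.sum_congr fun a ra => ?_
  rw [Finsupp.sum_smul_index (by simp), Finsupp.smul_sum]
  refine Finsupp.sum_congr fun b rb => ?_
  rw [smul_smul, mul_left_comm]

lemma qshL_sum_left {ι : Type*} (s : Finset ι) (f : ι → (RawMat d →₀ R))
    (G : RawMat d →₀ R) : qshL (∑ i ∈ s, f i) G = ∑ i ∈ s, qshL (f i) G := by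
  classical
  induction s using Finset.induction_on with
  | empty => simp [qshL_zero_left]
  | insert _ _ hne ih =>
      rw [Finset.sum_insert hne, Finset.sum_insert hne, qshL_add_left, ih]

lemma qshL_sum_right {ι : Type*} (s : Finset ι) (F : RawMat d →₀ R)
    (f : ι → (RawMat d →₀ R)) : qshL F (∑ i ∈ s, f i) = ∑ i ∈ s, qshL F (f i) := by
  classical
  induction s using Finset.induction_on with
  | empty => simp [qshL_zero_right]
  | insert _ _ hne ih =>
      rw [Finset.sum_insert hne, Finset.sum_insert hne, qshL_add_right, ih]

end AuxAlg
end TwoParam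

namespace TwoParam
section AuxAssoc
open Finset

variable {d : ℕ} {R : Type*} [CommRing R]

lemma qsh_assoc_single (a b c : RawMat d) :
    qshL (qsh R a b) (Finsupp.single c (1 : R))
      = qshL (Finsupp.single a (1 : R)) (qsh R b c) := by
  classical
  have hL : qshL (qsh R a b) (Finsupp.single c (1 : R))
      = ∑ i ∈ Finset.range (a.rows + b.rows + 1), ∑ fg ∈ cov2 a.rows b.rows i,
        ∑ i' ∈ Finset.range (a.cols + b.cols + 1), ∑ fg' ∈ cov2 a.cols b.cols i',
          ∑ j ∈ Finset.range (i + c.rows + 1), ∑ ph ∈ cov2 i c.rows j,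
            ∑ k ∈ Finset.range (i' + c.cols + 1), ∑ ph' ∈ cov2 i' c.cols k,
              Finsupp.single (cMat3 a b c (ph.1 ∘ fg.1) (ph.1 ∘ fg.2) ph.2
                (ph'.1 ∘ fg'.1) (ph'.1 ∘ fg'.2) ph'.2) (1 : R) := by
    simp only [qsh_eq_qsh2]
    unfold qsh2
    simp only [qshL_sum_left, qshL_single_single, one_mul, one_smul]
    simp only [qsh_eq_qsh2]
    unfold qsh2
    refine Finset.sum_congr rfl fun i _ => Finset.sum_congr rfl fun fg _ =>
      Finset.sum_congr rfl fun i' _ => Finset.sum_congr rfl fun fg' _ =>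
        Finset.sum_congr rfl fun j _ => Finset.sum_congr rfl fun ph _ =>
          Finset.sum_congr rfl fun k _ => Finset.sum_congr rfl fun ph' _ => ?_
    exact congrArg (fun M : RawMat d => Finsupp.single M (1 : R))
      (cMat2_cMat2 a b c fg.1 fg.2 fg'.1 fg'.2 ph.1 ph.2 ph'.1 ph'.2)
  have hR : qshL (Finsupp.single a (1 : R)) (qsh R b c)
      = ∑ i ∈ Finset.range (b.rows + c.rows + 1), ∑ gh ∈ cov2 b.rows c.rows i,
        ∑ i' ∈ Finset.range (b.cols + c.cols + 1), ∑ gh' ∈ cov2 b.cols c.cols i',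
          ∑ j ∈ Finset.range (a.rows + i + 1), ∑ fψ ∈ cov2 a.rows i j,
            ∑ k ∈ Finset.range (a.cols + i' + 1), ∑ fψ' ∈ cov2 a.cols i' k,
              Finsupp.single (cMat3 a b c fψ.1 (fψ.2 ∘ gh.1) (fψ.2 ∘ gh.2)
                fψ'.1 (fψ'.2 ∘ gh'.1) (fψ'.2 ∘ gh'.2)) (1 : R) := by
    simp only [qsh_eq_qsh2]
    unfold qsh2
    simp only [qshL_sum_right, qshL_single_single, one_mul, one_smul]
    simp only [qsh_eq_qsh2]
    unfold qsh2
    refine Finset.sum_congr rfl fun i _ => Finset.sum_congr rfl fun gh _ =>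
      Finset.sum_congr rfl fun i' _ => Finset.sum_congr rfl fun gh' _ =>
        Finset.sum_congr rfl fun j _ => Finset.sum_congr rfl fun fψ _ =>
          Finset.sum_congr rfl fun k _ => Finset.sum_congr rfl fun fψ' _ => ?_
    exact congrArg (fun M : RawMat d => Finsupp.single M (1 : R))
      (cMat2_cMat2' a b c gh.1 gh.2 gh'.1 gh'.2 fψ.1 fψ.2 fψ'.1 fψ'.2)
  rw [hL, hR]
  -- reorder sums: bring the row data together
  conv_lhs => enter [2, i, 2, fg, 2, i']; rw [Finset.sum_comm]
  conv_lhs => enter [2, i, 2, fg]; rw [Finset.sum_comm]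
  conv_lhs => enter [2, i, 2, fg, 2, j, 2, i']; rw [Finset.sum_comm]
  conv_lhs => enter [2, i, 2, fg, 2, j]; rw [Finset.sum_comm]
  conv_rhs => enter [2, i, 2, gh, 2, i']; rw [Finset.sum_comm]
  conv_rhs => enter [2, i, 2, gh]; rw [Finset.sum_comm]
  conv_rhs => enter [2, i, 2, gh, 2, j, 2, i']; rw [Finset.sum_comm]
  conv_rhs => enter [2, i, 2, gh, 2, j]; rw [Finset.sum_comm]
  -- factor through the triple covering parametrization
  refine Eq.trans (reindexL a.rows b.rows c.rows (fun j F G H =>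
    ∑ i' ∈ Finset.range (a.cols + b.cols + 1), ∑ fg' ∈ cov2 a.cols b.cols i',
      ∑ k ∈ Finset.range (i' + c.cols + 1), ∑ ph' ∈ cov2 i' c.cols k,
        Finsupp.single (cMat3 a b c F G H
          (ph'.1 ∘ fg'.1) (ph'.1 ∘ fg'.2) ph'.2) (1 : R))) ?_
  refine Eq.trans (Finset.sum_congr rfl fun j _ => Finset.sum_congr rfl fun FGH _ =>
    reindexL a.cols b.cols c.cols (fun k F' G' H' =>
      Finsupp.single (cMat3 a b c FGH.1 FGH.2.1 FGH.2.2 F' G' H') (1 : R))) ?_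
  refine Eq.symm ?_
  refine Eq.trans (reindexR a.rows b.rows c.rows (fun j F G H =>
    ∑ i' ∈ Finset.range (b.cols + c.cols + 1), ∑ gh' ∈ cov2 b.cols c.cols i',
      ∑ k ∈ Finset.range (a.cols + i' + 1), ∑ fψ' ∈ cov2 a.cols i' k,
        Finsupp.single (cMat3 a b c F G H
          fψ'.1 (fψ'.2 ∘ gh'.1) (fψ'.2 ∘ gh'.2)) (1 : R))) ?_
  exact Finset.sum_congr rfl fun j _ => Finset.sum_congr rfl fun FGH _ =>
    reindexR a.cols b.cols c.cols (fun k F' G' H' =>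
      Finsupp.single (cMat3 a b c FGH.1 FGH.2.1 FGH.2.2 F' G' H') (1 : R))

end AuxAssoc
end TwoParam

open TwoParam in
/-- the two-parameter quasi-shuffle, extended bilinearly to the
free module on matrix compositions, is commutative, associative, and has the
empty composition as unit. -/
theorem statement2 {d : ℕ} {R : Type*} [CommRing R] [IsDomain R]
    (F G H : RawMat d →₀ R)
    (hF : ∀ x ∈ F.support, x.IsComp) (hG : ∀ x ∈ G.support, x.IsComp)
    (hH : ∀ x ∈ H.support, x.IsComp) :
    qshL F G = qshL G F ∧
    qshL (qshL F G) H = qshL F (qshL G H) ∧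
    qshL (Finsupp.single (RawMat.empty d) (1 : R)) F = F ∧
    qshL F (Finsupp.single (RawMat.empty d) (1 : R)) = F := by
  classical
  refine ⟨?_, ?_, ?_, ?_⟩
  · -- commutativity
    clear hF hG hH
    induction F using Finsupp.induction_linear with
    | zero => rw [qshL_zero_left, qshL_zero_right]
    | add f g hf hg => rw [qshL_add_left, qshL_add_right, hf, hg]
    | single a r =>
        induction G using Finsupp.induction_linear with
        | zero => rw [qshL_zero_left, qshL_zero_right]
        | add f g hf hg => rw [qshL_add_left, qshL_add_right, hf, hg]
        | single b r' =>
            rw [qshL_single_single, qshL_single_single, mul_comm, qsh_comm]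
  · -- associativity
    clear hF hG hH
    induction F using Finsupp.induction_linear with
    | zero => rw [qshL_zero_left, qshL_zero_left, qshL_zero_left]
    | add f g hf hg =>
        rw [qshL_add_left, qshL_add_left, qshL_add_left, hf, hg]
    | single a ra =>
        induction G using Finsupp.induction_linear with
        | zero =>
            rw [qshL_zero_right, qshL_zero_left, qshL_zero_right]
        | add f g hf hg =>
            rw [qshL_add_right, qshL_add_left, qshL_add_left, qshL_add_right,
              hf, hg]
        | single b rb =>
            induction H using Finsupp.induction_linear with
            | zero => rw [qshL_zero_right, qshL_zero_right, qshL_zero_right]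
            | add f g hf hg =>
                rw [qshL_add_right, qshL_add_right, qshL_add_right, hf, hg]
            | single c rc =>
                rw [qshL_single_single, qshL_single_single,
                  qshL_smul_left, qshL_smul_right]
                rw [show (Finsupp.single c rc : RawMat d →₀ R)
                    = rc • Finsupp.single c 1 by
                  rw [Finsupp.smul_single, smul_eq_mul, mul_one]]
                rw [show (Finsupp.single a ra : RawMat d →₀ R)
                    = ra • Finsupp.single a 1 by
                  rw [Finsupp.smul_single, smul_eq_mul, mul_one]]
                rw [qshL_smul_right, qshL_smul_left, qsh_assoc_single,
                  smul_smul, smul_smul]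
                rw [show ra * rb * rc = rb * rc * ra by ring]
  · -- left unit
    clear hF hG hH
    induction F using Finsupp.induction_linear with
    | zero => rw [qshL_zero_right]
    | add f g hf hg => rw [qshL_add_right, hf, hg]
    | single b r =>
        rw [qshL_single_single, one_mul, qsh_empty_left, Finsupp.smul_single,
          smul_eq_mul, mul_one]
  · -- right unit
    clear hF hG hH
    induction F using Finsupp.induction_linear with
    | zero => rw [qshL_zero_left]
    | add f g hf hg => rw [qshL_add_left, hf, hg]
    | single a r =>
        rw [qshL_single_single, mul_one, qsh_empty_right, Finsupp.smul_single,
          smul_eq_mul, mul_one]
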